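/- Let ω be a nonzero 1-form on a finite connected metric graph C with all residues zero (value zero on all leaf edges), satisfying the Kirchhoff condition at internal vertices. Then there exists a loop ρ in C such that ∫_ρ ω = Σ_{e∈ρ} l(e)·ω(e⃗) ≠ 0. Equivalently, a holomorphic 1-form that is exact must be identically zero. -/

import Mathlib

open Finset

section GraphSetup

variable {V D : Type} [Fintype V] [Fintype D] [DecidableEq V] [DecidableEq D]

/-- A loop in a graph given by darts: a nonempty cyclic chain of darts, injective on
(unoriented) edges.  `rev` is orientation reversal and `tail` the initial vertex of
a dart; the head of `d` is `tail (rev d)`. -/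
def IsLoop (rev : D → D) (tail : D → V) (c : List D) : Prop :=
  c ≠ [] ∧ c.Nodup ∧ (∀ d ∈ c, rev d ∉ c) ∧
    c.Chain' (fun d d' => tail (rev d) = tail d') ∧
    ∀ a ∈ c.head?, ∀ b ∈ c.getLast?, tail (rev b) = tail a

/-- The integral of a 1-form `ω` along a loop `c`: `Σ l(e)·ω(e⃗)`. -/
def loopIntegral (len : D → ℝ) (ω : D → ℝ) (c : List D) : ℝ :=
  (c.map fun d => len d * ω d).sum

/-- A 1-form on the graph: antisymmetric under orientation reversal and satisfying
the Kirchhoff balancing condition at every internal (non-leaf) vertex. -/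
def IsBalanced (rev : D → D) (tail : D → V) (isLeaf : V → Prop) [DecidablePred isLeaf]
    (ω : D → ℝ) : Prop :=
  (∀ d, ω (rev d) = - ω d) ∧
    ∀ v, ¬ isLeaf v → ∑ d ∈ univ.filter (fun d => tail d = v), ω d = 0

/-- A 1-form is exact if its integral over every loop vanishes. -/
def IsExact (rev : D → D) (tail : D → V) (len : D → ℝ) (ω : D → ℝ) : Prop :=
  ∀ c : List D, IsLoop rev tail c → loopIntegral len ω c = 0

/-- A 1-form is holomorphic if its residues (its values on leaf edges) all vanish. -/
def IsHolomorphic (tail : D → V) (isLeaf : V → Prop) (ω : D → ℝ) : Prop :=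
  ∀ d, isLeaf (tail d) → ω d = 0

/-- Connectivity of the graph: any two vertices are joined by a chain of darts. -/
def GraphConnected (rev : D → D) (tail : D → V) : Prop :=
  ∀ v w : V, Relation.ReflTransGen (fun x y => ∃ d, tail d = x ∧ tail (rev d) = y) v w

end GraphSetup
/-- A nonzero holomorphic (all residues zero) balanced 1-form on a finite connected
metric graph has a loop along which its integral `Σ l(e)·ω(e⃗)` is nonzero. -/
theorem stmt7 {V D : Type} [Fintype V] [Fintype D] [DecidableEq V] [DecidableEq D]
    (rev : D → D) (tail : D → V) (isLeaf : V → Prop) [DecidablePred isLeaf]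
    (len : D → ℝ)
    (hrev : ∀ d, rev (rev d) = d) (hrevne : ∀ d, rev d ≠ d)
    (hconn : GraphConnected rev tail)
    (hleaf : ∀ v, isLeaf v ↔ (univ.filter fun d => tail d = v).card = 1)
    (htri : ∀ v, ¬ isLeaf v → (univ.filter fun d => tail d = v).card = 3)
    (hlen : ∀ d, 0 < len d) (hlensym : ∀ d, len (rev d) = len d)
    (ω : D → ℝ)
    (hb : IsBalanced rev tail isLeaf ω)
    (hh : IsHolomorphic tail isLeaf ω)
    (hne : ω ≠ 0) :
    ∃ c : List D, IsLoop rev tail c ∧ loopIntegral len ω c ≠ 0 := by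
  classical
  -- find a dart with positive ω
  obtain ⟨d1, hd1⟩ : ∃ d, ω d ≠ 0 := by
    by_contra h; push_neg at h; exact hne (funext h)
  obtain ⟨d0, hd0⟩ : ∃ d, 0 < ω d := by
    rcases lt_or_gt_of_ne hd1 with h | h
    · exact ⟨rev d1, by rw [hb.1]; linarith⟩
    · exact ⟨d1, h⟩
  -- step lemma: from a positive dart we can continue with a positive dart
  have step : ∀ d : D, 0 < ω d → ∃ d', tail d' = tail (rev d) ∧ 0 < ω d' := by
    intro d hd
    set v := tail (rev d) with hv
    have hvleaf : ¬ isLeaf v := by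
      intro h
      have h0 := hh (rev d) h
      rw [hb.1 d] at h0; linarith
    have hsum := hb.2 v hvleaf
    by_contra hcon
    push_neg at hcon
    have hlt : ∑ d' ∈ univ.filter (fun d' => tail d' = v), ω d'
        < ∑ _d' ∈ univ.filter (fun d' => tail d' = v), (0:ℝ) := by
      refine Finset.sum_lt_sum (fun i hi => hcon i (by simpa using hi)) ?_
      refine ⟨rev d, by simp [hv], ?_⟩
      rw [hb.1 d]; linarith
    rw [Finset.sum_const_zero] at hlt
    linarith
  -- the successor function on positive darts
  have hex : ∀ p : {d : D // 0 < ω d}, ∃ q : {d : D // 0 < ω d},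
      tail q.1 = tail (rev p.1) := by
    intro p
    obtain ⟨d', h1, h2⟩ := step p.1 p.2
    exact ⟨⟨d', h2⟩, h1⟩
  choose g hg using hex
  set seq : ℕ → {d : D // 0 < ω d} := fun n => g^[n] ⟨d0, hd0⟩ with hseq
  have hchain : ∀ n, tail (rev (seq n).1) = tail (seq (n + 1)).1 := by
    intro n
    have : seq (n + 1) = g (seq n) := Function.iterate_succ_apply' g n _
    rw [this]
    exact (hg (seq n)).symm
  -- pigeonhole: some tail repeats
  have hrep : ∃ k, 0 < k ∧ ∃ i, tail (seq i).1 = tail (seq (i + k)).1 := by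
    obtain ⟨a, b, hab, heq⟩ := Fintype.exists_ne_map_eq_of_card_lt
      (fun n : Fin (Fintype.card V + 1) => tail (seq n).1) (by simp)
    rcases lt_or_gt_of_ne (fun h : (a:ℕ) = b => hab (Fin.ext h)) with h | h
    · refine ⟨(b:ℕ) - (a:ℕ), by omega, (a:ℕ), ?_⟩
      have e2 : (a:ℕ) + ((b:ℕ) - (a:ℕ)) = (b:ℕ) := by omega
      rw [e2]; exact congrArg (fun n : Fin _ => tail (seq n).1) (Fin.ext rfl) ▸ heq
    · refine ⟨(a:ℕ) - (b:ℕ), by omega, (b:ℕ), ?_⟩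
      have e2 : (b:ℕ) + ((a:ℕ) - (b:ℕ)) = (a:ℕ) := by omega
      rw [e2]; exact heq.symm
  set k0 := Nat.find hrep with hk0
  obtain ⟨hk0pos, i, hi⟩ := Nat.find_spec hrep
  -- tails within the window are pairwise distinct
  have hdist : ∀ t t', t < k0 → t' < k0 → tail (seq (i + t)).1 = tail (seq (i + t')).1
      → t = t' := by
    intro t t' ht ht' he
    by_contra hne'
    rcases Nat.lt_or_ge t t' with h | h
    · have hm : t' - t < Nat.find hrep := by omega
      refine Nat.find_min hrep hm ⟨by omega, i + t, ?_⟩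
      have e2 : i + t + (t' - t) = i + t' := by omega
      rw [e2]; exact he
    · have h' : t' < t := by omega
      have hm : t - t' < Nat.find hrep := by omega
      refine Nat.find_min hrep hm ⟨by omega, i + t', ?_⟩
      have e2 : i + t' + (t - t') = i + t := by omega
      rw [e2]; exact he.symm
  refine ⟨(List.range k0).map (fun t => (seq (i + t)).1), ⟨?_, ?_, ?_, ?_, ?_⟩, ?_⟩
  · simp [List.range_eq_nil]; omega
  · refine List.Nodup.map_on ?_ List.nodup_range
    intro t ht t' ht' he
    simp only [List.mem_range] at ht ht'
    exact hdist t t' ht ht' (by rw [he])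
  · intro d hd hrd
    simp only [List.mem_map, List.mem_range] at hd hrd
    obtain ⟨t, ht, rfl⟩ := hd
    obtain ⟨t', ht', he⟩ := hrd
    have h1 : 0 < ω (seq (i + t)).1 := (seq (i + t)).2
    have h2 : 0 < ω (rev (seq (i + t)).1) := he ▸ (seq (i + t')).2
    rw [hb.1] at h2; linarith
  · unfold List.Chain'
    rw [List.isChain_map]
    rw [List.isChain_iff_getElem]
    intro n hn
    simp only [List.length_range] at hn
    simp only [List.get_eq_getElem, List.getElem_range]
    have := hchain (i + n)
    rw [show i + n + 1 = i + (n + 1) by omega] at this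
    exact this
  · intro a ha b hb'
    have hk1 : k0 - 1 < k0 := by omega
    have hhead : ((List.range k0).map (fun t => (seq (i + t)).1)).head? =
        some (seq (i + 0)).1 := by
      rw [List.head?_eq_getElem? ]
      simp [List.getElem?_map, List.getElem?_range, hk0pos]
      exact ⟨0, List.getElem?_range (by omega), rfl⟩
    have hlast : ((List.range k0).map (fun t => (seq (i + t)).1)).getLast? =
        some (seq (i + (k0 - 1))).1 := by
      rw [List.getLast?_eq_getElem?]
      simp only [List.length_map, List.length_range, List.getElem?_map]
      rw [List.getElem?_range hk1]; rfl
    rw [hhead] at ha; rw [hlast] at hb'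
    simp only [Option.mem_def, Option.some.injEq] at ha hb'
    subst ha; subst hb'
    have h1 := hchain (i + (k0 - 1))
    rw [show i + (k0 - 1) + 1 = i + k0 by omega] at h1
    have hi' : tail (seq i).1 = tail (seq (i + k0)).1 := hi
    rw [h1, Nat.add_zero, ← hi']
  · have hpos : ∀ x ∈ (((List.range k0).map (fun t => (seq (i + t)).1)).map
        (fun d => len d * ω d)), 0 < x := by
      intro x hx
      simp only [List.mem_map, List.mem_range] at hx
      obtain ⟨d, ⟨t, ht, rfl⟩, rfl⟩ := hx
      exact mul_pos (hlen _) (seq (i + t)).2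
    have hnil : (((List.range k0).map (fun t => (seq (i + t)).1)).map
        (fun d => len d * ω d)) ≠ [] := by
      simp [List.range_eq_nil]; omega
    have := List.sum_pos _ hpos hnil
    unfold loopIntegral
    linarith
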